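/- The function f : ℝ → ℝ² given by f(x) = (x, −x eˣ) is not *-quasiconvex with respect to the cone ℝ²₊: there exists ξ ∈ ℝ²₊ such that x ↦ ⟨ξ, f(x)⟩ is not quasiconvex. -/
import Mathlib


/-- `f x = (x, -x eˣ)` is not `*`-quasiconvex w.r.t. `ℝ²₊`: some
`ξ = (a, b) ∈ ℝ²₊` makes `x ↦ ⟨ξ, f x⟩` not quasiconvex. -/
theorem example_not_star_quasiconvex :
    ∃ a b : ℝ, 0 ≤ a ∧ 0 ≤ b ∧
      ¬ QuasiconvexOn ℝ Set.univ (fun x : ℝ => a * x + b * (-x * Real.exp x)) := by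
  refine ⟨0, 1, le_refl 0, zero_le_one, fun h => ?_⟩
  have hconv := h (2 * Real.exp (-2))
  have hx : (-2 : ℝ) ∈ {x ∈ Set.univ | (fun x : ℝ => 0 * x + 1 * (-x * Real.exp x)) x ≤ 2 * Real.exp (-2)} := by
    simp only [Set.mem_setOf_eq, Set.mem_univ, true_and]
    ring_nf
    linarith [Real.exp_pos (-2 : ℝ)]
  have hy : (0 : ℝ) ∈ {x ∈ Set.univ | (fun x : ℝ => 0 * x + 1 * (-x * Real.exp x)) x ≤ 2 * Real.exp (-2)} := by
    simp only [Set.mem_setOf_eq, Set.mem_univ, true_and]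
    simp
    positivity
  have hmid := hconv hx hy (a := 1/2) (b := 1/2) (by norm_num) (by norm_num) (by norm_num)
  simp only [Set.mem_setOf_eq, Set.mem_univ, true_and, smul_eq_mul] at hmid
  have h1 : (1/2 : ℝ) * (-2) + 1/2 * 0 = -1 := by norm_num
  rw [h1] at hmid
  have h2 : Real.exp (-1 : ℝ) = Real.exp (-2) * Real.exp 1 := by
    rw [← Real.exp_add]; norm_num
  have h3 : (0:ℝ) * (-1) + 1 * (- (-1) * Real.exp (-1)) = Real.exp (-2) * Real.exp 1 := by
    rw [h2]; ring
  rw [h3] at hmid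
  have he : (2 : ℝ) < Real.exp 1 := by
    have := Real.exp_one_gt_d9; linarith
  have hp := Real.exp_pos (-2 : ℝ)
  nlinarith
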